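/- If F is a closed subspace of codimension n in a normed space E, then the closure of F in the completion of E has codimension n. -/

import Mathlib

/-- If `F` is a closed subspace of codimension `n` in a normed space `E`, then the closure
of `F` in the completion of `E` has codimension `n`. -/
theorem stmt0 {E : Type*} [NormedAddCommGroup E] [NormedSpace ℝ E]
    (F : Submodule ℝ E) (hF : IsClosed (F : Set E))
    (n : ℕ) (hfin : FiniteDimensional ℝ (E ⧸ F)) (hn : Module.finrank ℝ (E ⧸ F) = n) :
    FiniteDimensional ℝ (UniformSpace.Completion E ⧸
        (F.map (UniformSpace.Completion.toComplₗᵢ (𝕜 := ℝ) (E := E)).toLinearMap).topologicalClosure) ∧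
      Module.finrank ℝ (UniformSpace.Completion E ⧸
        (F.map (UniformSpace.Completion.toComplₗᵢ (𝕜 := ℝ) (E := E)).toLinearMap).topologicalClosure) = n := by
  haveI : CompleteSpace (E ⧸ F) := FiniteDimensional.complete ℝ _
  set ι : E →L[ℝ] UniformSpace.Completion E := UniformSpace.Completion.toComplL with hι
  have hι_dense : DenseRange ι := UniformSpace.Completion.denseRange_coe
  have hι_ui : IsUniformInducing ι := UniformSpace.Completion.isUniformInducing_coe E
  set q : E →L[ℝ] E ⧸ F := ⟨F.mkQ, F.isOpenQuotientMap_mkQ.continuous⟩ with hq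
  set qbar : UniformSpace.Completion E →L[ℝ] E ⧸ F := q.extend ι with hqbar
  have hcompat : ∀ e : E, qbar (ι e) = q e := fun e =>
    ContinuousLinearMap.extend_eq q hι_dense hι_ui e
  -- a continuous linear section of the quotient map
  obtain ⟨s, hs⟩ : ∃ s : (E ⧸ F) →ₗ[ℝ] E, F.mkQ ∘ₗ s = LinearMap.id :=
    F.mkQ.exists_rightInverse_of_surjective (by rw [Submodule.range_mkQ])
  have hs' : ∀ y : E ⧸ F, F.mkQ (s y) = y := fun y => by simpa using LinearMap.congr_fun hs y
  let sL : (E ⧸ F) →L[ℝ] E := ⟨s, s.continuous_of_finiteDimensional⟩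
  set G : Submodule ℝ (UniformSpace.Completion E) :=
    (F.map (UniformSpace.Completion.toComplₗᵢ (𝕜 := ℝ) (E := E)).toLinearMap).topologicalClosure
    with hG
  have hmap : ∀ e : E, e ∈ F → ι e ∈ G := fun e he =>
    (F.map _).le_topologicalClosure ⟨e, he, rfl⟩
  -- the kernel of the extension equals G
  have hGK : G = LinearMap.ker (qbar : UniformSpace.Completion E →ₗ[ℝ] E ⧸ F) := by
    apply le_antisymm
    · refine Submodule.topologicalClosure_minimal _ ?_ (ContinuousLinearMap.isClosed_ker qbar)
      rintro x ⟨e, he, rfl⟩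
      have : qbar (ι e) = 0 := by
        rw [hcompat]
        exact (Submodule.Quotient.mk_eq_zero F).2 he
      exact this
    · -- the "projection" P = id - ι ∘ sL ∘ qbar maps everything into G
      set P : UniformSpace.Completion E →L[ℝ] UniformSpace.Completion E :=
        ContinuousLinearMap.id ℝ _ - ι.comp (sL.comp qbar) with hP
      have hPG : ∀ z, P z ∈ G := by
        intro z
        refine hι_dense.induction_on z ?_ ?_
        · exact IsClosed.preimage P.continuous (F.map _).isClosed_topologicalClosure
        · intro e
          have : P (ι e) = ι (e - sL (q e)) := by
            simp [hP, hcompat, map_sub]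
          rw [this]
          apply hmap
          have : F.mkQ (e - sL (q e)) = 0 := by
            simp only [map_sub]
            show F.mkQ e - F.mkQ (s (q e)) = 0
            rw [hs']
            show F.mkQ e - F.mkQ e = 0
            simp
          exact (Submodule.Quotient.mk_eq_zero F).1 this
      intro x hx
      have hx0 : qbar x = 0 := hx
      have : P x = x := by simp [hP, hx0]
      rw [← this]; exact hPG x
  -- qbar is surjective
  have hsurj : Function.Surjective qbar := by
    intro y
    obtain ⟨e, he⟩ := F.mkQ_surjective y
    exact ⟨ι e, by rw [hcompat]; exact he⟩
  have hker : LinearMap.ker (qbar : UniformSpace.Completion E →ₗ[ℝ] E ⧸ F) = G := by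
    rw [hGK]
  let eqv : (UniformSpace.Completion E ⧸ G) ≃ₗ[ℝ] E ⧸ F :=
    (Submodule.quotEquivOfEq _ _ hker.symm).trans
      (LinearMap.quotKerEquivOfSurjective (qbar : UniformSpace.Completion E →ₗ[ℝ] E ⧸ F) hsurj)
  constructor
  · exact Module.Finite.equiv eqv.symm
  · rw [eqv.finrank_eq, hn]
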